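/- Let m ≠ 0, ω > 0, h > 0 be real with ω²h² ≠ 8. Suppose real numbers q_{j−1}, q_j, q_{j+1} satisfy the symplectic Simpson scheme (1/h²)(q_{j+1} − 2q_j + q_{j−1}) + (ω²/24)(q_{j+1} + 22q_j + q_{j−1}) − (ω⁴h²/24)q_j = 0, and define p_j = m(q_j − q_{j−1})/h − h(mω²/6)·(q_{j−1} + 2q_j)/(1 − ω²h²/8) + h³(mω⁴/48)·q_j/(1 − ω²h²/8) and p_{j+1} = m(q_{j+1} − q_j)/h − h(mω²/6)·(q_j + 2q_{j+1})/(1 − ω²h²/8) + h³(mω⁴/48)·q_{j+1}/(1 − ω²h²/8). Then (p_{j+1}, q_{j+1})ᵗ = Φ₃·(p_j, q_j)ᵗ, where Φ₃ is the 2×2 real matrix with common prefactor 1/(1 + ω²h²/24) and entries (Φ₃)₁₁ = (Φ₃)₂₂ = 1 − (11/24)ω²h² + ω⁴h⁴/48, (Φ₃)₁₂ = −mω²h·(1 − ω²h²/12)·(1 − ω²h²/24), (Φ₃)₂₁ = (h/m)·(1 − ω²h²/8). -/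

import Mathlib

set_option maxHeartbeats 2000000


/-- Eliminating q_{j-1} from the symplectic Simpson scheme and the discrete momenta
yields the one-step matrix form with the matrix Φ₃. -/
theorem simpson_scheme_matrix_form
    (m ω h : ℝ) (hm : m ≠ 0) (hω : 0 < ω) (hh : 0 < h)
    (hstab : ω ^ 2 * h ^ 2 ≠ 8)
    (qjm qj qjp pj pjp : ℝ)
    (hscheme : (1 / h ^ 2) * (qjp - 2 * qj + qjm)
        + (ω ^ 2 / 24) * (qjp + 22 * qj + qjm)
        - (ω ^ 4 * h ^ 2 / 24) * qj = 0)
    (hpj : pj = m * (qj - qjm) / h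
        - h * (m * ω ^ 2 / 6) * ((qjm + 2 * qj) / (1 - ω ^ 2 * h ^ 2 / 8))
        + h ^ 3 * (m * ω ^ 4 / 48) * (qj / (1 - ω ^ 2 * h ^ 2 / 8)))
    (hpjp : pjp = m * (qjp - qj) / h
        - h * (m * ω ^ 2 / 6) * ((qj + 2 * qjp) / (1 - ω ^ 2 * h ^ 2 / 8))
        + h ^ 3 * (m * ω ^ 4 / 48) * (qjp / (1 - ω ^ 2 * h ^ 2 / 8))) :
    ((1 / (1 + ω ^ 2 * h ^ 2 / 24)) •
        !![1 - (11 / 24) * ω ^ 2 * h ^ 2 + ω ^ 4 * h ^ 4 / 48,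
             -(m * ω ^ 2 * h) * (1 - ω ^ 2 * h ^ 2 / 12) * (1 - ω ^ 2 * h ^ 2 / 24);
           (h / m) * (1 - ω ^ 2 * h ^ 2 / 8),
             1 - (11 / 24) * ω ^ 2 * h ^ 2 + ω ^ 4 * h ^ 4 / 48]).mulVec ![pj, qj]
      = ![pjp, qjp] := by
  have hh0 : h ≠ 0 := ne_of_gt hh
  have h8 : (8 : ℝ) - ω ^ 2 * h ^ 2 ≠ 0 := fun hc => hstab (by linarith)
  have h8' : (1 : ℝ) - ω ^ 2 * h ^ 2 / 8 ≠ 0 := fun hc => h8 (by linarith)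
  have h24 : (1 : ℝ) + ω ^ 2 * h ^ 2 / 24 ≠ 0 := by positivity
  have h24' : (24 : ℝ) + ω ^ 2 * h ^ 2 ≠ 0 := by positivity
  have hqm2 : qjm = (-(24 + ω ^ 2 * h ^ 2) * qjp
      + (48 - 22 * ω ^ 2 * h ^ 2 + ω ^ 4 * h ^ 4) * qj) / (24 + ω ^ 2 * h ^ 2) := by
    rw [eq_div_iff h24']
    have h2 : h ^ 2 ≠ 0 := pow_ne_zero 2 hh0
    field_simp at hscheme
    linarith [hscheme]
  have hpj' : pj = m * (2 * (24 + ω ^ 2 * h ^ 2) * qjp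
      - (48 - 22 * ω ^ 2 * h ^ 2 + ω ^ 4 * h ^ 4) * qj) / (6 * h * (8 - ω ^ 2 * h ^ 2)) := by
    rw [hpj, hqm2]
    rw [eq_div_iff (by simp [hh0, h8, mul_ne_zero])]
    field_simp
    ring
  have hpjp' : pjp = m * ((48 - 22 * ω ^ 2 * h ^ 2 + ω ^ 4 * h ^ 4) * qjp
      - 2 * (24 + ω ^ 2 * h ^ 2) * qj) / (6 * h * (8 - ω ^ 2 * h ^ 2)) := by
    rw [hpjp]
    rw [eq_div_iff (by simp [hh0, h8, mul_ne_zero])]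
    have h8c : (8 : ℝ) - h ^ 2 * ω ^ 2 ≠ 0 := by rwa [mul_comm] at h8
    field_simp [h8']
    ring
  have h6 : (6 : ℝ) * h * (8 - ω ^ 2 * h ^ 2) ≠ 0 := by simp [hh0, h8, mul_ne_zero]
  funext i
  fin_cases i <;>
    simp only [Matrix.mulVec, dotProduct, Fin.sum_univ_two, Matrix.smul_apply,
      Matrix.cons_val_zero, Matrix.cons_val_one, Matrix.head_cons, Matrix.cons_val',
      Matrix.head_fin_const, Matrix.empty_val', Matrix.cons_val_fin_one, smul_eq_mul, Matrix.of_apply, Fin.zero_eta, Fin.mk_one] <;>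
    simp only [hpj', hpjp'] <;>
    field_simp <;>
    ring
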